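/- (Algebraic content of level-set rigidity when D = 0.) Let m ≥ 3, let R = (R_ij) be symmetric with S = R_tt, let f satisfy the adapted-frame condition with w ≠ 0, and suppose the pointwise gradient Einstein-type equation holds with α ≠ 0 and β ≠ 0. Define h_ab = −H_ab / w for a, b ∈ {1,…,m−1} and h = (1/(m−1)) Σ_a h_aa. If D_ijk = 0 for all i, j, k, then: (i) R_am = 0 for every a ∈ {1,…,m−1}; (ii) h_ab = h δ_ab for all a, b ∈ {1,…,m−1} (umbilicity); and (iii) R_ab = ((S − R_mm)/(m−1)) δ_ab for all a, b ∈ {1,…,m−1}. -/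

import Mathlib

open Finset

noncomputable def kdelta {m : ℕ} (i j : Fin m) : ℝ := if i = j then 1 else 0

noncomputable def Dt (m : ℕ) (R : Fin m → Fin m → ℝ) (f : Fin m → ℝ)
    (i j k : Fin m) : ℝ :=
  (1 / ((m : ℝ) - 2)) * (f k * R i j - f j * R i k)
  + (1 / (((m : ℝ) - 1) * ((m : ℝ) - 2))) *
      ∑ t, f t * (R t k * kdelta i j - R t j * kdelta i k)
  - ((∑ t, R t t) / (((m : ℝ) - 1) * ((m : ℝ) - 2))) *
      (f k * kdelta i j - f j * kdelta i k)

theorem level_set_rigidity_of_D_zero (m : ℕ) (hm : 3 ≤ m)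
    (R H : Fin m → Fin m → ℝ)
    (hR : ∀ i j, R i j = R j i) (hHsymm : ∀ i j, H i j = H j i)
    (f : Fin m → ℝ) (e : Fin m) (w : ℝ) (hw : w ≠ 0)
    (hfa : ∀ a, a ≠ e → f a = 0) (hfe : f e = w)
    (α β μ ρ lam : ℝ) (hα : α ≠ 0) (hβ : β ≠ 0)
    (heq : ∀ i j, α * R i j + β * H i j + μ * f i * f j
      = (ρ * (∑ t, R t t) + lam) * kdelta i j)
    (h : Fin m → Fin m → ℝ) (hdef : ∀ a b, h a b = - H a b / w)
    (hmean : ℝ)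
    (hmeandef : hmean = (1 / ((m : ℝ) - 1)) * ∑ a ∈ Finset.univ.erase e, h a a)
    (hD : ∀ i j k, Dt m R f i j k = 0) :
    (∀ a, a ≠ e → R a e = 0) ∧
    (∀ a b, a ≠ e → b ≠ e → h a b = hmean * kdelta a b) ∧
    (∀ a b, a ≠ e → b ≠ e →
      R a b = (((∑ t, R t t) - R e e) / ((m : ℝ) - 1)) * kdelta a b) := by
  set S := ∑ t, R t t with hS
  have hm3 : (3:ℝ) ≤ (m:ℝ) := by exact_mod_cast hm
  have hm1 : (m:ℝ) - 1 ≠ 0 := by linarith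
  have hm2 : (m:ℝ) - 2 ≠ 0 := by linarith
  have hsum : ∀ g : Fin m → ℝ, (∑ t, f t * g t) = w * g e := by
    intro g
    rw [Finset.sum_eq_single e]
    · rw [hfe]
    · intro t _ ht; rw [hfa t ht]; ring
    · intro ht; exact absurd (Finset.mem_univ e) ht
  -- Part (i)
  have part1 : ∀ a, a ≠ e → R a e = 0 := by
    intro a ha
    have hd := hD e a e
    unfold Dt at hd
    rw [hsum] at hd
    simp only [kdelta, if_pos rfl, if_neg (Ne.symm ha), hfa a ha, hfe] at hd
    rw [hR a e]
    field_simp at hd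
    have h2 : (w * (((m:ℝ)-2) * ((m:ℝ)-2))) * R e a = 0 := by
      rw [if_pos trivial] at hd; linear_combination ((m:ℝ)-2) * hd
    exact (mul_eq_zero.mp h2).resolve_left (mul_ne_zero hw (mul_ne_zero hm2 hm2))
  -- Part (iii)
  have part3 : ∀ a b, a ≠ e → b ≠ e →
      R a b = ((S - R e e) / ((m : ℝ) - 1)) * kdelta a b := by
    intro a b ha hb
    have hd := hD a b e
    unfold Dt at hd
    rw [hsum] at hd
    simp only [kdelta, if_neg (Ne.symm ha), if_neg ha, hfa b hb, hfe] at hd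
    simp only [kdelta]
    by_cases hab : a = b
    · simp only [if_pos hab] at hd ⊢
      subst hab
      field_simp at hd ⊢
      rw [← hS] at hd
      have h2 : (w * (((m:ℝ)-1) * (((m:ℝ)-2) * ((m:ℝ)-2)))) *
          (R a a * ((m:ℝ)-1) - (S - R e e)) = 0 := by
          linear_combination ((m:ℝ)-1) * ((m:ℝ)-2) * ((m:ℝ)-2) * hd
      have h3 := (mul_eq_zero.mp h2).resolve_left
        (mul_ne_zero hw (mul_ne_zero hm1 (mul_ne_zero hm2 hm2)))
      linarith
    · simp only [if_neg hab] at hd ⊢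
      field_simp at hd ⊢
      have hd' : w * R a b = 0 :=
        (mul_eq_zero.mp (show (w * R a b) * ((m:ℝ)-1) = 0 by linear_combination hd)).resolve_right hm1
      rcases mul_eq_zero.mp hd' with hz | hz
      · exact absurd hz hw
      · rw [hz]; ring
  -- value of h
  have hval : ∀ a b, a ≠ e → b ≠ e →
      h a b = ((α * ((S - R e e)/((m:ℝ)-1)) - (ρ * S + lam)) / (β * w)) * kdelta a b := by
    intro a b ha hb
    have he := heq a b
    rw [hfa a ha] at he
    have hH : H a b = ((ρ * S + lam) * kdelta a b - α * R a b) / β := by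
      field_simp; linarith [he]
    rw [hdef, hH, part3 a b ha hb]
    field_simp
    ring
  set c0 : ℝ := (α * ((S - R e e)/((m:ℝ)-1)) - (ρ * S + lam)) / (β * w) with hc0
  have hcard : ((Finset.univ.erase e).card : ℝ) = (m:ℝ) - 1 := by
    rw [Finset.card_erase_of_mem (Finset.mem_univ e), Finset.card_univ, Fintype.card_fin]
    have : (1:ℕ) ≤ m := by omega
    push_cast [Nat.cast_sub this]
    ring
  have hmean_eq : hmean = c0 := by
    rw [hmeandef]
    have hsum2 : ∑ a ∈ Finset.univ.erase e, h a a = ∑ _a ∈ Finset.univ.erase e, c0 :=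
      Finset.sum_congr rfl (fun a ha => by
        rw [hval a a (Finset.ne_of_mem_erase ha) (Finset.ne_of_mem_erase ha)]
        simp [kdelta])
    rw [hsum2, Finset.sum_const, nsmul_eq_mul, hcard]
    field_simp
  refine ⟨part1, ?_, part3⟩
  intro a b ha hb
  rw [hval a b ha hb, hmean_eq]
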